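/- Let λ ∈ ℂ ∖ Γ and i ∈ ℕ. Then θ(λ) ≠ 0, the function z ↦ z^{i+1} e_{i,λ}(z) extends holomorphically to a neighbourhood of 0, and its value at 0 is (−1)^i · i! · θ(λ). In particular e_{i,λ} has a pole of order exactly i+1 at 0. -/

import Mathlib

open Complex

/-- The lattice `Γ = ℤ + τℤ` associated to `τ`. -/
def lattice (τ : ℂ) : Set ℂ := {z : ℂ | ∃ m n : ℤ, z = (m : ℂ) + (n : ℂ) * τ}

/-- `e_{i,λ}(z) = (d/dz)^i (θ(λ+z)/θ(z))`. -/
noncomputable def eFun (θ : ℂ → ℂ) (lam : ℂ) (i : ℕ) : ℂ → ℂ :=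
  iteratedDeriv i (fun z => θ (lam + z) / θ z)

open Filter Topology

private lemma analyticAt_deriv' {G : ℂ → ℂ} (hG : AnalyticAt ℂ G 0) :
    AnalyticAt ℂ (deriv G) 0 := by
  obtain ⟨s, hs, hG'⟩ := hG.eventually_analyticAt.exists_mem
  obtain ⟨t, hts, hto, h0t⟩ := mem_nhds_iff.mp hs
  exact (AnalyticOnNhd.deriv (fun y hy => hG' y (hts hy))) 0 h0t

private lemma key_aux (f F : ℂ → ℂ) (hF : AnalyticAt ℂ F 0)
    (heq : ∀ᶠ z in 𝓝[≠] (0 : ℂ), f z = F z / z) (i : ℕ) :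
    ∃ G : ℂ → ℂ, AnalyticAt ℂ G 0 ∧
      G 0 = (-1 : ℂ) ^ i * (i.factorial : ℂ) * F 0 ∧
      ∀ᶠ z in 𝓝[≠] (0 : ℂ), iteratedDeriv i f z = G z / z ^ (i + 1) := by
  induction i with
  | zero =>
    refine ⟨F, hF, by simp, ?_⟩
    simpa [iteratedDeriv_zero] using heq
  | succ n ih =>
    obtain ⟨G, hG, hG0, hGe⟩ := ih
    refine ⟨fun z => z * deriv G z - ((n : ℂ) + 1) * G z, ?_, ?_, ?_⟩
    · exact (analyticAt_id.mul (analyticAt_deriv' hG)).sub (analyticAt_const.mul hG)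
    · simp only [hG0]
      rw [Nat.factorial_succ]
      push_cast
      ring
    · -- upgrade hGe to an eventual statement about neighborhoods
      have h1 : ∀ᶠ z in 𝓝 (0 : ℂ), z ∈ ({0}ᶜ : Set ℂ) → iteratedDeriv n f z = G z / z ^ (n + 1) :=
        eventually_nhdsWithin_iff.mp hGe
      have h2 := h1.eventually_nhds
      have h3 := hG.eventually_analyticAt
      rw [eventually_nhdsWithin_iff]
      filter_upwards [h2, h3] with z hz2 hz3 hz0
      have hz0' : z ≠ 0 := hz0
      replace hz2 : ∀ᶠ w in 𝓝 z, w ∈ ({0}ᶜ : Set ℂ) → iteratedDeriv n f w = G w / w ^ (n + 1) := hz2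
      have hEq : iteratedDeriv n f =ᶠ[𝓝 z] fun w => G w / w ^ (n + 1) := by
        have hopen : ∀ᶠ w in 𝓝 z, w ≠ 0 := isOpen_ne.eventually_mem hz0'
        filter_upwards [hz2, hopen] with w hw hw0
        exact hw hw0
      have hGd : HasDerivAt G (deriv G z) z := hz3.differentiableAt.hasDerivAt
      have hpow : HasDerivAt (fun w : ℂ => w ^ (n + 1)) (((n : ℂ) + 1) * z ^ n) z := by
        simpa using hasDerivAt_pow (n + 1) z
      have hdiv : HasDerivAt (fun w => G w / w ^ (n + 1)) _ z := hGd.div hpow (pow_ne_zero _ hz0')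
      rw [iteratedDeriv_succ, hEq.deriv_eq, hdiv.deriv]
      have hzpow : (z : ℂ) ^ (n + 1) ≠ 0 := pow_ne_zero _ hz0'
      field_simp
      ring

/-- **Behaviour of `e_{i,λ}` at `0`.**
For `λ ∉ Γ` and `i ∈ ℕ`: `θ(λ) ≠ 0`; the function `z ↦ z^{i+1} e_{i,λ}(z)` extends
holomorphically near `0` with value `(−1)^i i! θ(λ)` at `0`; in particular `e_{i,λ}`
has a pole of order exactly `i+1` at `0`. -/
theorem eFun_pole_at_zero (τ : ℂ) (hτ : 0 < τ.im) (θ : ℂ → ℂ)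
    (hθ_entire : Differentiable ℂ θ)
    (hθ_deriv : deriv θ 0 = 1)
    (hθ_zero : ∀ z : ℂ, θ z = 0 ↔ z ∈ lattice τ)
    (hθ_per1 : ∀ z : ℂ, θ (z + 1) = - θ z)
    (hθ_perτ : ∀ z : ℂ, θ (z + τ) =
      - Complex.exp (-(Real.pi : ℂ) * Complex.I * τ) *
        Complex.exp (-2 * (Real.pi : ℂ) * Complex.I * z) * θ z)
    (lam : ℂ) (hlam : lam ∉ lattice τ) (i : ℕ) :
    θ lam ≠ 0 ∧
    (∃ g : ℂ → ℂ, AnalyticAt ℂ g 0 ∧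
      (∀ᶠ z in nhdsWithin (0 : ℂ) {(0 : ℂ)}ᶜ, g z = z ^ (i + 1) * eFun θ lam i z) ∧
      g 0 = (-1 : ℂ) ^ i * (i.factorial : ℂ) * θ lam) ∧
    (∀ hm : MeromorphicAt (eFun θ lam i) 0,
      meromorphicOrderAt (eFun θ lam i) 0 = ((-(i + 1 : ℤ) : ℤ) : WithTop ℤ)) := by
  have hθlam : θ lam ≠ 0 := fun h => hlam ((hθ_zero lam).mp h)
  have hθ0 : θ 0 = 0 := (hθ_zero 0).mpr ⟨0, 0, by simp⟩
  -- the analytic factor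
  set F : ℂ → ℂ := fun z => θ (lam + z) / dslope θ 0 z with hFdef
  have hds0 : dslope θ 0 0 = 1 := by rw [dslope_same, hθ_deriv]
  have hdsan : AnalyticAt ℂ (dslope θ 0) 0 := by
    obtain ⟨p, hp⟩ := hθ_entire.analyticAt 0
    exact hp.has_fpower_series_dslope_fslope.analyticAt
  have hnum : AnalyticAt ℂ (fun z : ℂ => θ (lam + z)) 0 := by
    have := (hθ_entire.analyticAt (lam + 0)).comp
      ((analyticAt_const (v := lam)).add analyticAt_id)
    simpa [Function.comp_def] using this
  have hF : AnalyticAt ℂ F 0 := hnum.div hdsan (by rw [hds0]; exact one_ne_zero)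
  have hF0 : F 0 = θ lam := by
    show θ (lam + 0) / dslope θ 0 0 = θ lam
    rw [hds0, add_zero, div_one]
  have heq : ∀ᶠ z in 𝓝[≠] (0 : ℂ), θ (lam + z) / θ z = F z / z := by
    filter_upwards [self_mem_nhdsWithin] with z hz
    have hz0 : z ≠ 0 := hz
    have hds : dslope θ 0 z = θ z / z := by
      rw [dslope_of_ne _ hz0, slope_def_field]
      simp [hθ0]
    rw [hFdef]
    simp only [hds]
    rw [div_div_eq_mul_div, div_div, mul_comm (θ z) z, ← div_div,
      mul_div_assoc, div_self hz0, mul_one]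
  obtain ⟨G, hG, hG0, hGe⟩ := key_aux _ F hF heq i
  have hG0' : G 0 = (-1 : ℂ) ^ i * (i.factorial : ℂ) * θ lam := by rw [hG0, hF0]
  refine ⟨hθlam, ⟨G, hG, ?_, hG0'⟩, ?_⟩
  · filter_upwards [hGe, self_mem_nhdsWithin] with z hz hz0
    have hz0' : (z : ℂ) ≠ 0 := hz0
    show G z = z ^ (i + 1) * iteratedDeriv i (fun z => θ (lam + z) / θ z) z
    rw [hz, mul_comm, div_mul_cancel₀ _ (pow_ne_zero _ hz0')]
  · intro hm
    rw [meromorphicOrderAt_eq_int_iff hm]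
    refine ⟨G, hG, ?_, ?_⟩
    · rw [hG0']
      refine mul_ne_zero (mul_ne_zero ?_ ?_) hθlam
      · exact pow_ne_zero _ (by norm_num)
      · exact_mod_cast Nat.factorial_ne_zero i
    · filter_upwards [hGe, self_mem_nhdsWithin] with z hz hz0
      have hz0' : (z : ℂ) ≠ 0 := hz0
      show iteratedDeriv i (fun z => θ (lam + z) / θ z) z = _
      rw [hz, sub_zero, smul_eq_mul]
      have hzp : (z : ℂ) ^ (-(i + 1 : ℤ)) = (z ^ (i + 1))⁻¹ := by
        rw [zpow_neg]
        norm_cast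
      rw [hzp, inv_mul_eq_div]
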